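/- Let k : [0,∞) → ℝ be any function such that for every m ≥ 0, k(m) ∈ [π/4, π/2) and m·sin(2k(m)) + k(m)·cos(2k(m)) = 0, set E(m) = √(m² + k(m)²), u₁^m(t) = (k(m)·cos(k(m)(t+1)) + (E(m)+m)·sin(k(m)(t+1)), k(m)·cos(k(m)(t+1)) − (E(m)−m)·sin(k(m)(t+1))), N_m = (∫_{−1}^{1} |u₁^m(t)|²_{ℂ²} dt)^{−1/2}, φ₁^{m,+} = N_m·u₁^m, and φ₁^{m,−}(t) = (φ₁^{m,+}₂(t), φ₁^{m,+}₁(t)). Then there exist constants C > 0 and m₀ > 0 such that for all m ∈ [0, m₀] and all t ∈ [−1,1] there holds |φ₁^{m,+}(t) − φ₁⁺(t)|_{ℂ²} ≤ C·m and |φ₁^{m,−}(t) − φ₁⁻(t)|_{ℂ²} ≤ C·m. -/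

import Mathlib

open MeasureTheory Set

/-- `E(m) = √(m² + k(m)²)`. -/
noncomputable def Efun (k : ℝ → ℝ) (m : ℝ) : ℝ := Real.sqrt (m ^ 2 + (k m) ^ 2)

/-- First component of the (unnormalized) transverse eigenfunction `u₁^m`. -/
noncomputable def ua (k : ℝ → ℝ) (m t : ℝ) : ℝ :=
  k m * Real.cos (k m * (t + 1)) + (Efun k m + m) * Real.sin (k m * (t + 1))

/-- Second component of the (unnormalized) transverse eigenfunction `u₁^m`. -/
noncomputable def ub (k : ℝ → ℝ) (m t : ℝ) : ℝ :=
  k m * Real.cos (k m * (t + 1)) - (Efun k m - m) * Real.sin (k m * (t + 1))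

/-- The normalization constant `N_m = (∫_{-1}^1 |u₁^m|²_{ℂ²} dt)^{-1/2}`. -/
noncomputable def Nfun (k : ℝ → ℝ) (m : ℝ) : ℝ :=
  (Real.sqrt (∫ t in (-1 : ℝ)..1, ((ua k m t) ^ 2 + (ub k m t) ^ 2)))⁻¹

/-- First component of `φ₁⁺`. -/
noncomputable def phiPlus1 (t : ℝ) : ℝ :=
  (1 / 2) * Real.cos (Real.pi * (t + 1) / 4) + (1 / 2) * Real.sin (Real.pi * (t + 1) / 4)

/-- Second component of `φ₁⁺`. -/
noncomputable def phiPlus2 (t : ℝ) : ℝ :=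
  (1 / 2) * Real.cos (Real.pi * (t + 1) / 4) - (1 / 2) * Real.sin (Real.pi * (t + 1) / 4)

lemma cosLip (s θ : ℝ) : |Real.cos s - Real.cos θ| ≤ |s - θ| := by
  rw [Real.cos_sub_cos, abs_mul, abs_mul]
  have h1 : |Real.sin ((s+θ)/2)| ≤ 1 := Real.abs_sin_le_one _
  have h2 : |Real.sin ((s-θ)/2)| ≤ |s-θ|/2 := by
    have := Real.abs_sin_le_abs (x := (s-θ)/2)
    rwa [abs_div, abs_two] at this
  have h0 : |(-2 : ℝ)| = 2 := by norm_num
  rw [h0]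
  nlinarith [abs_nonneg (Real.sin ((s-θ)/2)), abs_nonneg (Real.sin ((s+θ)/2)), abs_nonneg (s - θ)]

lemma sinLip (s θ : ℝ) : |Real.sin s - Real.sin θ| ≤ |s - θ| := by
  rw [Real.sin_sub_sin, abs_mul, abs_mul]
  have h1 : |Real.cos ((s+θ)/2)| ≤ 1 := Real.abs_cos_le_one _
  have h2 : |Real.sin ((s-θ)/2)| ≤ |s-θ|/2 := by
    have := Real.abs_sin_le_abs (x := (s-θ)/2)
    rwa [abs_div, abs_two] at this
  have h0 : |(2 : ℝ)| = 2 := by norm_num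
  rw [h0]
  nlinarith [abs_nonneg (Real.sin ((s-θ)/2)), abs_nonneg (Real.cos ((s+θ)/2)), abs_nonneg (s - θ)]

/-- auxiliary: the limit profile -/
noncomputable def ua0 (s : ℝ) : ℝ :=
  (Real.pi/4) * (Real.cos (Real.pi*(s+1)/4) + Real.sin (Real.pi*(s+1)/4))

noncomputable def ub0 (s : ℝ) : ℝ :=
  (Real.pi/4) * (Real.cos (Real.pi*(s+1)/4) - Real.sin (Real.pi*(s+1)/4))

set_option maxHeartbeats 2000000 in
theorem eigenfunction_asymptotics
    (k : ℝ → ℝ)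
    (hk : ∀ m : ℝ, 0 ≤ m → k m ∈ Ico (Real.pi / 4) (Real.pi / 2) ∧
      m * Real.sin (2 * k m) + k m * Real.cos (2 * k m) = 0) :
    ∃ C > 0, ∃ m₀ > 0, ∀ m ∈ Icc (0 : ℝ) m₀, ∀ t ∈ Icc (-1 : ℝ) 1,
      Real.sqrt ((Nfun k m * ua k m t - phiPlus1 t) ^ 2
        + (Nfun k m * ub k m t - phiPlus2 t) ^ 2) ≤ C * m ∧
      Real.sqrt ((Nfun k m * ub k m t - phiPlus2 t) ^ 2
        + (Nfun k m * ua k m t - phiPlus1 t) ^ 2) ≤ C * m := by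
  refine ⟨1600, by norm_num, 1/400, by norm_num, ?_⟩
  intro m hm t ht
  obtain ⟨hm0, hm1⟩ := hm
  obtain ⟨⟨hk1, hk2⟩, hkeq⟩ := hk m hm0
  have hpi1 : (3.14 : ℝ) < Real.pi := by linarith [Real.pi_gt_d6]
  have hpi2 : Real.pi < 3.15 := by linarith [Real.pi_lt_d6]
  have hpipos : (0:ℝ) < Real.pi := by linarith
  -- Step 1: k m ≤ π/4 + m
  have hκm : k m ≤ Real.pi/4 + m := by
    set x := 2 * k m - Real.pi/2 with hxdef
    have hx0 : 0 ≤ x := by rw [hxdef]; linarith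
    have hx1 : x ≤ Real.pi/2 := by rw [hxdef]; linarith
    have hsinx : Real.sin x = -Real.cos (2 * k m) := by
      rw [hxdef]; simp [Real.sin_sub]
    have hcosx : Real.cos x = Real.sin (2 * k m) := by
      rw [hxdef]; simp [Real.cos_sub]
    have heq2 : k m * Real.sin x = m * Real.cos x := by
      rw [hsinx, hcosx]; linarith
    have hJ : 2 / Real.pi * x ≤ Real.sin x := Real.mul_le_sin hx0 hx1
    have hJ' : 2 * x ≤ Real.pi * Real.sin x := by
      have h := mul_le_mul_of_nonneg_left hJ hpipos.le
      have hid : Real.pi * (2/Real.pi * x) = 2 * x := by field_simp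
      linarith [hid ▸ h]
    have hsx0 : 0 ≤ Real.sin x := by nlinarith
    have hcle : Real.cos x ≤ 1 := Real.cos_le_one x
    have h5 : Real.pi/4 * Real.sin x ≤ k m * Real.sin x :=
      mul_le_mul_of_nonneg_right hk1 hsx0
    have h6 : m * Real.cos x ≤ m * 1 := mul_le_mul_of_nonneg_left hcle hm0
    -- 2x ≤ π sin x = 4 (π/4 sin x) ≤ 4 (k m sin x) = 4 m cos x ≤ 4m ⇒ x ≤ 2m
    have : x ≤ 2 * m := by linarith
    rw [hxdef] at this; linarith
  -- Step 2: bounds on E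
  have hE0 : 0 ≤ Efun k m := Real.sqrt_nonneg _
  have hE1 : k m ≤ Efun k m := by
    have h : (k m)^2 ≤ m^2 + (k m)^2 := by nlinarith
    have := Real.sqrt_le_sqrt h
    rwa [Real.sqrt_sq (by linarith : (0:ℝ) ≤ k m)] at this
  have hE2 : Efun k m ≤ k m + m := by
    have h : m^2 + (k m)^2 ≤ (k m + m)^2 := by nlinarith
    have := Real.sqrt_le_sqrt h
    rwa [Real.sqrt_sq (by linarith : (0:ℝ) ≤ k m + m)] at this
  -- Step 3: pointwise bounds
  have hkey : ∀ s ∈ Icc (-1:ℝ) 1,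
      |ua k m s - ua0 s| ≤ 8*m ∧ |ub k m s - ub0 s| ≤ 8*m ∧
      |ua k m s| ≤ 4 ∧ |ub k m s| ≤ 4 := by
    intro s hs
    obtain ⟨hs1, hs2⟩ := hs
    have harg : |k m * (s+1) - Real.pi*(s+1)/4| ≤ 2*m := by
      have hid : k m * (s+1) - Real.pi*(s+1)/4 = (k m - Real.pi/4) * (s+1) := by ring
      rw [hid, abs_mul]
      have h1 : |k m - Real.pi/4| ≤ m := abs_le.mpr ⟨by linarith, by linarith⟩
      have h2 : |s+1| ≤ 2 := abs_le.mpr ⟨by linarith, by linarith⟩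
      calc |k m - Real.pi/4| * |s+1| ≤ m * 2 :=
            mul_le_mul h1 h2 (abs_nonneg _) hm0
        _ = 2*m := by ring
    have hcd : |Real.cos (k m * (s+1)) - Real.cos (Real.pi*(s+1)/4)| ≤ 2*m :=
      (cosLip _ _).trans harg
    have hsd : |Real.sin (k m * (s+1)) - Real.sin (Real.pi*(s+1)/4)| ≤ 2*m :=
      (sinLip _ _).trans harg
    have hc1 : |Real.cos (k m * (s+1))| ≤ 1 := Real.abs_cos_le_one _
    have hs1' : |Real.sin (k m * (s+1))| ≤ 1 := Real.abs_sin_le_one _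
    have hcoef1 : |k m - Real.pi/4| ≤ m := abs_le.mpr ⟨by linarith, by linarith⟩
    have hcoef2 : |Efun k m + m - Real.pi/4| ≤ 3*m :=
      abs_le.mpr ⟨by linarith, by linarith⟩
    have hcoef3 : |Efun k m - m - Real.pi/4| ≤ 3*m :=
      abs_le.mpr ⟨by linarith, by linarith⟩
    have hpi4 : Real.pi/4 ≤ 1 := by linarith
    refine ⟨?_, ?_, ?_, ?_⟩
    · have hrw : ua k m s - ua0 s
          = (k m - Real.pi/4) * Real.cos (k m * (s+1))
            + (Real.pi/4) * (Real.cos (k m * (s+1)) - Real.cos (Real.pi*(s+1)/4))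
            + (Efun k m + m - Real.pi/4) * Real.sin (k m * (s+1))
            + (Real.pi/4) * (Real.sin (k m * (s+1)) - Real.sin (Real.pi*(s+1)/4)) := by
        simp only [ua, ua0]; ring
      rw [hrw]
      have t1 : |(k m - Real.pi/4) * Real.cos (k m * (s+1))| ≤ m := by
        rw [abs_mul]
        calc _ ≤ m * 1 := mul_le_mul hcoef1 hc1 (abs_nonneg _) hm0
          _ = m := by ring
      have t2 : |(Real.pi/4) * (Real.cos (k m * (s+1)) - Real.cos (Real.pi*(s+1)/4))| ≤ 2*m := by
        rw [abs_mul, abs_of_nonneg (by linarith : (0:ℝ) ≤ Real.pi/4)]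
        calc _ ≤ 1 * (2*m) := mul_le_mul hpi4 hcd (abs_nonneg _) (by norm_num)
          _ = 2*m := by ring
      have t3 : |(Efun k m + m - Real.pi/4) * Real.sin (k m * (s+1))| ≤ 3*m := by
        rw [abs_mul]
        calc _ ≤ (3*m) * 1 := mul_le_mul hcoef2 hs1' (abs_nonneg _) (by linarith)
          _ = 3*m := by ring
      have t4 : |(Real.pi/4) * (Real.sin (k m * (s+1)) - Real.sin (Real.pi*(s+1)/4))| ≤ 2*m := by
        rw [abs_mul, abs_of_nonneg (by linarith : (0:ℝ) ≤ Real.pi/4)]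
        calc _ ≤ 1 * (2*m) := mul_le_mul hpi4 hsd (abs_nonneg _) (by norm_num)
          _ = 2*m := by ring
      have hA := abs_add_le ((k m - Real.pi/4) * Real.cos (k m * (s+1))
            + (Real.pi/4) * (Real.cos (k m * (s+1)) - Real.cos (Real.pi*(s+1)/4))
            + (Efun k m + m - Real.pi/4) * Real.sin (k m * (s+1)))
        ((Real.pi/4) * (Real.sin (k m * (s+1)) - Real.sin (Real.pi*(s+1)/4)))
      have hB := abs_add_le ((k m - Real.pi/4) * Real.cos (k m * (s+1))
            + (Real.pi/4) * (Real.cos (k m * (s+1)) - Real.cos (Real.pi*(s+1)/4)))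
        ((Efun k m + m - Real.pi/4) * Real.sin (k m * (s+1)))
      have hC := abs_add_le ((k m - Real.pi/4) * Real.cos (k m * (s+1)))
        ((Real.pi/4) * (Real.cos (k m * (s+1)) - Real.cos (Real.pi*(s+1)/4)))
      linarith
    · have hrw : ub k m s - ub0 s
          = (k m - Real.pi/4) * Real.cos (k m * (s+1))
            + (Real.pi/4) * (Real.cos (k m * (s+1)) - Real.cos (Real.pi*(s+1)/4))
            + (-(Efun k m - m - Real.pi/4)) * Real.sin (k m * (s+1))
            + (-(Real.pi/4)) * (Real.sin (k m * (s+1)) - Real.sin (Real.pi*(s+1)/4)) := by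
        simp only [ub, ub0]; ring
      rw [hrw]
      have t1 : |(k m - Real.pi/4) * Real.cos (k m * (s+1))| ≤ m := by
        rw [abs_mul]
        calc _ ≤ m * 1 := mul_le_mul hcoef1 hc1 (abs_nonneg _) hm0
          _ = m := by ring
      have t2 : |(Real.pi/4) * (Real.cos (k m * (s+1)) - Real.cos (Real.pi*(s+1)/4))| ≤ 2*m := by
        rw [abs_mul, abs_of_nonneg (by linarith : (0:ℝ) ≤ Real.pi/4)]
        calc _ ≤ 1 * (2*m) := mul_le_mul hpi4 hcd (abs_nonneg _) (by norm_num)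
          _ = 2*m := by ring
      have t3 : |(-(Efun k m - m - Real.pi/4)) * Real.sin (k m * (s+1))| ≤ 3*m := by
        rw [abs_mul, abs_neg]
        calc _ ≤ (3*m) * 1 := mul_le_mul hcoef3 hs1' (abs_nonneg _) (by linarith)
          _ = 3*m := by ring
      have t4 : |(-(Real.pi/4)) * (Real.sin (k m * (s+1)) - Real.sin (Real.pi*(s+1)/4))| ≤ 2*m := by
        rw [abs_mul, abs_neg, abs_of_nonneg (by linarith : (0:ℝ) ≤ Real.pi/4)]
        calc _ ≤ 1 * (2*m) := mul_le_mul hpi4 hsd (abs_nonneg _) (by norm_num)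
          _ = 2*m := by ring
      have hA := abs_add_le ((k m - Real.pi/4) * Real.cos (k m * (s+1))
            + (Real.pi/4) * (Real.cos (k m * (s+1)) - Real.cos (Real.pi*(s+1)/4))
            + (-(Efun k m - m - Real.pi/4)) * Real.sin (k m * (s+1)))
        ((-(Real.pi/4)) * (Real.sin (k m * (s+1)) - Real.sin (Real.pi*(s+1)/4)))
      have hB := abs_add_le ((k m - Real.pi/4) * Real.cos (k m * (s+1))
            + (Real.pi/4) * (Real.cos (k m * (s+1)) - Real.cos (Real.pi*(s+1)/4)))
        ((-(Efun k m - m - Real.pi/4)) * Real.sin (k m * (s+1)))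
      have hC := abs_add_le ((k m - Real.pi/4) * Real.cos (k m * (s+1)))
        ((Real.pi/4) * (Real.cos (k m * (s+1)) - Real.cos (Real.pi*(s+1)/4)))
      linarith
    · have hA := abs_add_le (k m * Real.cos (k m * (s+1)))
        ((Efun k m + m) * Real.sin (k m * (s+1)))
      have t1 : |k m * Real.cos (k m * (s+1))| ≤ Real.pi/2 := by
        rw [abs_mul, abs_of_nonneg (by linarith : (0:ℝ) ≤ k m)]
        calc _ ≤ (Real.pi/2) * 1 := mul_le_mul (le_of_lt hk2) hc1 (abs_nonneg _) (by linarith)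
          _ = Real.pi/2 := by ring
      have t2 : |(Efun k m + m) * Real.sin (k m * (s+1))| ≤ Real.pi/2 + 2*m := by
        rw [abs_mul, abs_of_nonneg (by linarith : (0:ℝ) ≤ Efun k m + m)]
        calc _ ≤ (Real.pi/2 + 2*m) * 1 :=
              mul_le_mul (by linarith) hs1' (abs_nonneg _) (by linarith)
          _ = Real.pi/2 + 2*m := by ring
      simp only [ua]
      linarith
    · have hA := abs_sub (k m * Real.cos (k m * (s+1)))
        ((Efun k m - m) * Real.sin (k m * (s+1)))
      have t1 : |k m * Real.cos (k m * (s+1))| ≤ Real.pi/2 := by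
        rw [abs_mul, abs_of_nonneg (by linarith : (0:ℝ) ≤ k m)]
        calc _ ≤ (Real.pi/2) * 1 := mul_le_mul (le_of_lt hk2) hc1 (abs_nonneg _) (by linarith)
          _ = Real.pi/2 := by ring
      have t2 : |(Efun k m - m) * Real.sin (k m * (s+1))| ≤ Real.pi/2 + 2*m := by
        rw [abs_mul]
        have h3 : |Efun k m - m| ≤ Real.pi/2 + 2*m := abs_le.mpr ⟨by linarith, by linarith⟩
        calc _ ≤ (Real.pi/2 + 2*m) * 1 :=
              mul_le_mul h3 hs1' (abs_nonneg _) (by linarith)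
          _ = Real.pi/2 + 2*m := by ring
      simp only [ub]
      have := abs_sub_abs_le_abs_sub (k m * Real.cos (k m * (s+1)))
        ((Efun k m - m) * Real.sin (k m * (s+1)))
      have habs : |k m * Real.cos (k m * (s+1)) - (Efun k m - m) * Real.sin (k m * (s+1))|
          ≤ |k m * Real.cos (k m * (s+1))| + |(Efun k m - m) * Real.sin (k m * (s+1))| :=
        abs_sub _ _
      linarith
  -- bounds for the limit profile
  have hkey0 : ∀ s : ℝ, |ua0 s| ≤ 2 ∧ |ub0 s| ≤ 2 := by
    intro s
    have hc1 : |Real.cos (Real.pi*(s+1)/4)| ≤ 1 := Real.abs_cos_le_one _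
    have hs1' : |Real.sin (Real.pi*(s+1)/4)| ≤ 1 := Real.abs_sin_le_one _
    constructor
    · simp only [ua0]
      rw [abs_mul, abs_of_nonneg (by linarith : (0:ℝ) ≤ Real.pi/4)]
      have := abs_add_le (Real.cos (Real.pi*(s+1)/4)) (Real.sin (Real.pi*(s+1)/4))
      nlinarith [abs_nonneg (Real.cos (Real.pi*(s+1)/4) + Real.sin (Real.pi*(s+1)/4))]
    · simp only [ub0]
      rw [abs_mul, abs_of_nonneg (by linarith : (0:ℝ) ≤ Real.pi/4)]
      have := abs_sub (Real.cos (Real.pi*(s+1)/4)) (Real.sin (Real.pi*(s+1)/4))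
      nlinarith [abs_nonneg (Real.cos (Real.pi*(s+1)/4) - Real.sin (Real.pi*(s+1)/4))]
  -- Step 4: the integral
  set I := ∫ s in (-1:ℝ)..1, ((ua k m s) ^ 2 + (ub k m s) ^ 2) with hIdef
  have hNdef : Nfun k m = (Real.sqrt I)⁻¹ := by rw [Nfun, hIdef]
  have hcua : Continuous (fun s => ua k m s) := by
    simp only [ua]; fun_prop
  have hcub : Continuous (fun s => ub k m s) := by
    simp only [ub]; fun_prop
  have hcua0 : Continuous ua0 := by
    unfold ua0; fun_prop
  have hcub0 : Continuous ub0 := by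
    unfold ub0; fun_prop
  have hint1 : IntervalIntegrable (fun s => (ua k m s)^2 + (ub k m s)^2)
      volume (-1) 1 := ((hcua.pow 2).add (hcub.pow 2)).intervalIntegrable _ _
  have hint2 : IntervalIntegrable (fun s => (ua0 s)^2 + (ub0 s)^2)
      volume (-1) 1 := ((hcua0.pow 2).add (hcub0.pow 2)).intervalIntegrable _ _
  have hgconst : ∀ s : ℝ, (ua0 s)^2 + (ub0 s)^2 = Real.pi^2/8 := by
    intro s
    simp only [ua0, ub0]
    linear_combination (Real.pi^2/8) * Real.sin_sq_add_cos_sq (Real.pi*(s+1)/4)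
  have hI0 : (∫ s in (-1:ℝ)..1, ((ua0 s)^2 + (ub0 s)^2)) = Real.pi^2/4 := by
    simp only [hgconst, intervalIntegral.integral_const, smul_eq_mul]
    ring
  have hIdiff : |I - Real.pi^2/4| ≤ 192*m := by
    have hsub : I - Real.pi^2/4
        = ∫ s in (-1:ℝ)..1, (((ua k m s)^2 + (ub k m s)^2) - ((ua0 s)^2 + (ub0 s)^2)) := by
      rw [intervalIntegral.integral_sub hint1 hint2, hI0, hIdef]
    rw [hsub]
    have hb : ∀ s ∈ Set.uIoc (-1:ℝ) 1,
        ‖((ua k m s)^2 + (ub k m s)^2) - ((ua0 s)^2 + (ub0 s)^2)‖ ≤ 96*m := by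
      intro s hs
      have hs' : s ∈ Icc (-1:ℝ) 1 := by
        rw [Set.uIoc_of_le (by norm_num : (-1:ℝ) ≤ 1)] at hs
        exact ⟨le_of_lt hs.1, hs.2⟩
      obtain ⟨hda, hdb, hba, hbb⟩ := hkey s hs'
      obtain ⟨h0a, h0b⟩ := hkey0 s
      rw [Real.norm_eq_abs]
      have hid : ((ua k m s)^2 + (ub k m s)^2) - ((ua0 s)^2 + (ub0 s)^2)
          = (ua k m s - ua0 s) * (ua k m s + ua0 s)
            + (ub k m s - ub0 s) * (ub k m s + ub0 s) := by ring
      rw [hid]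
      have e1 : |(ua k m s - ua0 s) * (ua k m s + ua0 s)| ≤ 8*m * 6 := by
        rw [abs_mul]
        apply mul_le_mul hda ?_ (abs_nonneg _) (by linarith)
        calc |ua k m s + ua0 s| ≤ |ua k m s| + |ua0 s| := abs_add_le _ _
          _ ≤ 6 := by linarith
      have e2 : |(ub k m s - ub0 s) * (ub k m s + ub0 s)| ≤ 8*m * 6 := by
        rw [abs_mul]
        apply mul_le_mul hdb ?_ (abs_nonneg _) (by linarith)
        calc |ub k m s + ub0 s| ≤ |ub k m s| + |ub0 s| := abs_add_le _ _
          _ ≤ 6 := by linarith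
      calc |(ua k m s - ua0 s) * (ua k m s + ua0 s)
            + (ub k m s - ub0 s) * (ub k m s + ub0 s)|
          ≤ |(ua k m s - ua0 s) * (ua k m s + ua0 s)|
            + |(ub k m s - ub0 s) * (ub k m s + ub0 s)| := abs_add_le _ _
        _ ≤ 96*m := by linarith
    have := intervalIntegral.norm_integral_le_of_norm_le_const hb
    rw [Real.norm_eq_abs] at this
    have h2 : |(1:ℝ) - (-1)| = 2 := by norm_num
    rw [h2] at this
    linarith
  -- Step 5: bounds on sqrt I and N
  have hpisq : (9.8:ℝ) ≤ Real.pi^2 := by nlinarith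
  have hIlb : (1:ℝ) ≤ I := by
    have := abs_le.mp hIdiff
    have hm' : 192*m ≤ 0.48 := by linarith
    linarith [this.1]
  have hI0' : (0:ℝ) ≤ I := by linarith
  have hsq1 : (1:ℝ) ≤ Real.sqrt I := by
    have := Real.sqrt_le_sqrt hIlb
    rwa [Real.sqrt_one] at this
  have hsqI : Real.sqrt I * Real.sqrt I = I := Real.mul_self_sqrt hI0'
  have hsdiff : |Real.sqrt I - Real.pi/2| ≤ 192*m := by
    have hfac : (Real.sqrt I - Real.pi/2) * (Real.sqrt I + Real.pi/2) = I - Real.pi^2/4 := by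
      nlinarith [hsqI]
    have hpos : (1:ℝ) ≤ Real.sqrt I + Real.pi/2 := by linarith [Real.sqrt_nonneg I]
    calc |Real.sqrt I - Real.pi/2| = |Real.sqrt I - Real.pi/2| * 1 := by ring
      _ ≤ |Real.sqrt I - Real.pi/2| * (Real.sqrt I + Real.pi/2) :=
          mul_le_mul_of_nonneg_left hpos (abs_nonneg _)
      _ = |(Real.sqrt I - Real.pi/2) * (Real.sqrt I + Real.pi/2)| := by
          rw [abs_mul, abs_of_nonneg (by linarith : (0:ℝ) ≤ Real.sqrt I + Real.pi/2)]
      _ = |I - Real.pi^2/4| := by rw [hfac]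
      _ ≤ 192*m := hIdiff
  have hsqne : Real.sqrt I ≠ 0 := by linarith
  have hNle : Nfun k m ≤ 1 := by
    rw [hNdef]
    exact inv_le_one_of_one_le₀ hsq1
  have hN0 : 0 ≤ Nfun k m := by
    rw [hNdef]; positivity
  have hNdiff : |Nfun k m - 2/Real.pi| ≤ 192*m := by
    rw [hNdef]
    have hid : (Real.sqrt I)⁻¹ - 2/Real.pi
        = (Real.pi/2 - Real.sqrt I) * ((Real.sqrt I)⁻¹ * (2/Real.pi)) := by
      field_simp
    rw [hid, abs_mul]
    have b1 : |Real.pi/2 - Real.sqrt I| ≤ 192*m := by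
      rw [abs_sub_comm]; exact hsdiff
    have b2 : |(Real.sqrt I)⁻¹ * (2/Real.pi)| ≤ 1 := by
      rw [abs_mul]
      have c1 : |(Real.sqrt I)⁻¹| ≤ 1 := by
        rw [abs_of_nonneg (by positivity)]
        exact inv_le_one_of_one_le₀ hsq1
      have c2 : |(2:ℝ)/Real.pi| ≤ 1 := by
        rw [abs_of_nonneg (by positivity)]
        rw [div_le_one hpipos]; linarith
      calc _ ≤ 1 * 1 := mul_le_mul c1 c2 (abs_nonneg _) (by norm_num)
        _ = 1 := by ring
    calc _ ≤ (192*m) * 1 := mul_le_mul b1 b2 (abs_nonneg _) (by linarith)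
      _ = 192*m := by ring
  -- Step 6: conclude
  obtain ⟨hda, hdb, hba, hbb⟩ := hkey t ht
  have hphi1 : phiPlus1 t = (2/Real.pi) * ua0 t := by
    simp only [phiPlus1, ua0]
    field_simp
    ring
  have hphi2 : phiPlus2 t = (2/Real.pi) * ub0 t := by
    simp only [phiPlus2, ub0]
    field_simp
    ring
  have h2pi : (0:ℝ) ≤ 2/Real.pi ∧ 2/Real.pi ≤ 1 := by
    constructor
    · positivity
    · rw [div_le_one hpipos]; linarith
  have hA : |Nfun k m * ua k m t - phiPlus1 t| ≤ 800*m := by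
    have hrw : Nfun k m * ua k m t - phiPlus1 t
        = (Nfun k m - 2/Real.pi) * ua k m t + (2/Real.pi) * (ua k m t - ua0 t) := by
      rw [hphi1]; ring
    rw [hrw]
    have t1 : |(Nfun k m - 2/Real.pi) * ua k m t| ≤ 192*m*4 := by
      rw [abs_mul]
      exact mul_le_mul hNdiff hba (abs_nonneg _) (by linarith)
    have t2 : |(2/Real.pi) * (ua k m t - ua0 t)| ≤ 8*m := by
      rw [abs_mul, abs_of_nonneg h2pi.1]
      calc _ ≤ 1 * (8*m) := mul_le_mul h2pi.2 hda (abs_nonneg _) (by norm_num)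
        _ = 8*m := by ring
    calc _ ≤ |(Nfun k m - 2/Real.pi) * ua k m t|
          + |(2/Real.pi) * (ua k m t - ua0 t)| := abs_add_le _ _
      _ ≤ 800*m := by linarith
  have hB : |Nfun k m * ub k m t - phiPlus2 t| ≤ 800*m := by
    have hrw : Nfun k m * ub k m t - phiPlus2 t
        = (Nfun k m - 2/Real.pi) * ub k m t + (2/Real.pi) * (ub k m t - ub0 t) := by
      rw [hphi2]; ring
    rw [hrw]
    have t1 : |(Nfun k m - 2/Real.pi) * ub k m t| ≤ 192*m*4 := by
      rw [abs_mul]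
      exact mul_le_mul hNdiff hbb (abs_nonneg _) (by linarith)
    have t2 : |(2/Real.pi) * (ub k m t - ub0 t)| ≤ 8*m := by
      rw [abs_mul, abs_of_nonneg h2pi.1]
      calc _ ≤ 1 * (8*m) := mul_le_mul h2pi.2 hdb (abs_nonneg _) (by norm_num)
        _ = 8*m := by ring
    calc _ ≤ |(Nfun k m - 2/Real.pi) * ub k m t|
          + |(2/Real.pi) * (ub k m t - ub0 t)| := abs_add_le _ _
      _ ≤ 800*m := by linarith
  have hfin : ∀ a b : ℝ, |a| ≤ 800*m → |b| ≤ 800*m →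
      Real.sqrt (a^2 + b^2) ≤ 1600*m := by
    intro a b ha hb
    have h : a^2 + b^2 ≤ (1600*m)^2 := by
      nlinarith [sq_abs a, sq_abs b, abs_nonneg a, abs_nonneg b,
        mul_self_le_mul_self (abs_nonneg a) ha, mul_self_le_mul_self (abs_nonneg b) hb]
    have := Real.sqrt_le_sqrt h
    rwa [Real.sqrt_sq (by linarith : (0:ℝ) ≤ 1600*m)] at this
  exact ⟨hfin _ _ hA hB, hfin _ _ hB hA⟩
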